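/- Let μ be a Borel probability measure on ℝ with bounded support, and let h : [0,1] → ℝ be absolutely continuous with h(0) = h(1) = 0 and a.e. derivative h′ ∈ L¹((0,1)). Let Q_μ(p) = inf{x ∈ ℝ : μ((−∞, x]) ≥ p} denote the left-quantile function of μ. Then ∫_ℝ h( μ([x,∞)) ) dx = ∫₀¹ Q_μ(1−p)·h′(p) dp. -/

import Mathlib

open MeasureTheory Set Filter
open scoped ENNReal NNReal

/-- Auxiliary countability lemma: if the intervals `(A p, B p)` attached to points of `s`
are separated (for `p < q` in `s`, `B q ≤ A p`), then the set of points of `s` where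
`A p < B p` is countable. -/
lemma aux_countable_sep {A B : ℝ → ℝ} {s : Set ℝ}
    (hsep : ∀ p ∈ s, ∀ q ∈ s, p < q → B q ≤ A p) :
    {p | p ∈ s ∧ A p < B p}.Countable := by
  set D := {p | p ∈ s ∧ A p < B p} with hD
  have hc : ∀ p : D, ∃ r : ℚ, A p.1 < (r : ℝ) ∧ (r : ℝ) < B p.1 :=
    fun p => exists_rat_btwn p.2.2
  choose r hr1 hr2 using hc
  have hinj : Function.Injective r := by
    intro p q hpq
    apply Subtype.ext
    by_contra hne
    rcases lt_or_gt_of_ne hne with hlt | hlt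
    · have hsep' := hsep _ p.2.1 _ q.2.1 hlt
      have : (r q : ℝ) < (r p : ℝ) := (hr2 q).trans_le (hsep'.trans (hr1 p).le)
      rw [hpq] at this; exact lt_irrefl _ this
    · have hsep' := hsep _ q.2.1 _ p.2.1 hlt
      have : (r p : ℝ) < (r q : ℝ) := (hr2 p).trans_le (hsep'.trans (hr1 q).le)
      rw [hpq] at this; exact lt_irrefl _ this
  exact Set.countable_iff_exists_injective.mpr
    ⟨fun p => Encodable.encode (r p),
      fun p q hpq => hinj (Encodable.encode_injective hpq)⟩

/-- Quantile representation of the Choquet regularizer: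
`∫_ℝ h(μ([x,∞))) dx = ∫₀¹ Q_μ(1−p)·h′(p) dp` for a boundedly supported
probability measure `μ` and an absolutely continuous distortion `h` with
`h(0) = h(1) = 0`. -/
theorem stmt_15 (μ : Measure ℝ) [IsProbabilityMeasure μ]
    (hμ : ∃ K : Set ℝ, Bornology.IsBounded K ∧ μ Kᶜ = 0)
    (h h' : ℝ → ℝ)
    (h0 : h 0 = 0) (h1 : h 1 = 0)
    (hint : IntegrableOn h' (Set.Ioo 0 1))
    (hAC : ∀ x ∈ Set.Icc (0 : ℝ) 1, h x = ∫ p in (0 : ℝ)..x, h' p) :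
    let Qμ : ℝ → ℝ := fun p => sInf {x : ℝ | p ≤ (μ (Set.Iic x)).toReal}
    ∫ x : ℝ, h ((μ (Set.Ici x)).toReal) =
      ∫ p in Set.Ioo (0 : ℝ) 1, Qμ (1 - p) * h' p := by
  intro Qμ
  classical
  -- Extract a compact interval [a,b] carrying all the mass.
  obtain ⟨K, hKb, hK0⟩ := hμ
  obtain ⟨rr, hrr⟩ := (Metric.isBounded_iff_subset_closedBall 0).mp hKb
  set a : ℝ := -(max rr 0) with ha_def
  set b : ℝ := max rr 0 with hb_def
  have hab : a ≤ b := by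
    have : (0:ℝ) ≤ max rr 0 := le_max_right _ _
    simp only [ha_def, hb_def]; linarith
  have hKsub : K ⊆ Icc a b := by
    intro x hx
    have hx' := hrr hx
    rw [Metric.mem_closedBall, Real.dist_eq, sub_zero] at hx'
    have h1' := abs_le.mp hx'
    constructor
    · have : -(max rr 0) ≤ -rr := neg_le_neg (le_max_left _ _)
      linarith [h1'.1]
    · exact h1'.2.trans (le_max_left _ _)
  have hIccc : μ (Icc a b)ᶜ = 0 :=
    measure_mono_null (compl_subset_compl.mpr hKsub) hK0
  have hIcc1 : μ (Icc a b) = 1 :=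
    (prob_compl_eq_zero_iff measurableSet_Icc).mp hIccc
  -- Survival function S, upper CDF Fc, lower CDF Fl.
  set S : ℝ → ℝ := fun x => (μ (Ici x)).toReal with hS_def
  set Fc : ℝ → ℝ := fun x => (μ (Iic x)).toReal with hFc_def
  set Fl : ℝ → ℝ := fun x => (μ (Iio x)).toReal with hFl_def
  have hne : ∀ s : Set ℝ, μ s ≠ ⊤ := fun s => measure_ne_top μ s
  have hS_anti : Antitone S := fun x y hxy =>
    ENNReal.toReal_mono (hne _) (measure_mono (Ici_subset_Ici.mpr hxy))
  have hS_meas : Measurable S := hS_anti.measurable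
  have hS_nonneg : ∀ x, 0 ≤ S x := fun x => ENNReal.toReal_nonneg
  have hS_le_one : ∀ x, S x ≤ 1 := by
    intro x
    have h1' : μ (Ici x) ≤ 1 := prob_le_one
    have := ENNReal.toReal_mono (by simp) h1'
    simpa [hS_def] using this
  have hS_one : ∀ x ≤ a, S x = 1 := by
    intro x hx
    have h1' : μ (Ici x) = 1 := by
      refine le_antisymm prob_le_one ?_
      calc (1:ℝ≥0∞) = μ (Icc a b) := hIcc1.symm
        _ ≤ μ (Ici x) := measure_mono (fun y hy => le_trans hx hy.1)
    simp [hS_def, h1']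
  have hS_zero : ∀ x, b < x → S x = 0 := by
    intro x hx
    have hz : μ (Ici x) = 0 := by
      refine measure_mono_null ?_ hIccc
      intro y hy
      simp only [mem_compl_iff, mem_Icc, not_and, not_le]
      intro _
      exact lt_of_lt_of_le hx hy
    simp [hS_def, hz]
  have hFc_b : Fc b = 1 := by
    have h1' : μ (Iic b) = 1 := by
      refine le_antisymm prob_le_one ?_
      calc (1:ℝ≥0∞) = μ (Icc a b) := hIcc1.symm
        _ ≤ μ (Iic b) := measure_mono (fun y hy => hy.2)
    simp [hFc_def, h1']
  have hFc_lt_a : ∀ x, x < a → Fc x = 0 := by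
    intro x hx
    have hz : μ (Iic x) = 0 := by
      refine measure_mono_null ?_ hIccc
      intro y hy
      simp only [mem_compl_iff, mem_Icc, not_and, not_le]
      intro hay
      exfalso
      have : y ≤ x := hy
      linarith
    simp [hFc_def, hz]
  have hFl_le_Fc : ∀ x, Fl x ≤ Fc x := fun x =>
    ENNReal.toReal_mono (hne _) (measure_mono Iio_subset_Iic_self)
  have hFc_le_Fl : ∀ x y, x < y → Fc x ≤ Fl y := fun x y hxy =>
    ENNReal.toReal_mono (hne _) (measure_mono (fun z hz => lt_of_le_of_lt hz hxy))
  have hS_compl : ∀ x, S x = 1 - Fl x := by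
    intro x
    have hcompl : μ (Ici x) = 1 - μ (Iio x) := by
      have hc := measure_compl (measurableSet_Iio (a := x)) (hne _)
      rw [compl_Iio] at hc
      simpa [measure_univ] using hc
    rw [hS_def]
    simp only [hcompl]
    rw [ENNReal.toReal_sub_of_le prob_le_one (by simp)]
    simp [hFl_def]
  -- quantile-type functions.
  set T : ℝ → Set ℝ := fun p => {x : ℝ | 1 - p ≤ Fc x} with hT_def
  set Ap : ℝ → ℝ := fun p => sInf (T p) with hAp_def
  have hQA : ∀ p : ℝ, Qμ (1 - p) = Ap p := fun p => rfl
  set Bset : ℝ → Set ℝ := fun p => {x | x ∈ Icc a b ∧ p ≤ S x} ∪ {a} with hBset_def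
  set Bp : ℝ → ℝ := fun p => sSup (Bset p) with hBp_def
  have hBset_ne : ∀ p : ℝ, (Bset p).Nonempty := fun p => ⟨a, Or.inr rfl⟩
  have hBset_sub : ∀ p : ℝ, Bset p ⊆ Icc a b := by
    intro p x hx
    rcases hx with hx | hx
    · exact hx.1
    · rw [mem_singleton_iff] at hx; rw [hx]; exact ⟨le_refl a, hab⟩
  have hBset_bdd : ∀ p : ℝ, BddAbove (Bset p) := fun p =>
    ⟨b, fun x hx => (hBset_sub p hx).2⟩
  have hBp_mem : ∀ p : ℝ, Bp p ∈ Icc a b := by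
    intro p
    constructor
    · exact le_csSup (hBset_bdd p) (Or.inr rfl)
    · exact csSup_le (hBset_ne p) (fun x hx => (hBset_sub p hx).2)
  have hBp_anti : Antitone Bp := by
    intro p q hpq
    refine csSup_le_csSup (hBset_bdd p) (hBset_ne q) ?_
    intro x hx
    rcases hx with hx | hx
    · exact Or.inl ⟨hx.1, le_trans hpq hx.2⟩
    · exact Or.inr hx
  have hBp_meas : Measurable Bp := hBp_anti.measurable
  -- key: p ≤ S (Bp p) for p ∈ Ioo 0 1.
  have hBp_key : ∀ p ∈ Ioo (0:ℝ) 1, p ≤ S (Bp p) := by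
    intro p hp
    set c := Bp p with hc_def
    have hstep : ∀ ε : ℝ, 0 < ε → p ≤ S (c - ε) := by
      intro ε hε
      obtain ⟨x, hx, hcx⟩ := exists_lt_of_lt_csSup (hBset_ne p)
        (show c - ε < c by linarith)
      have hpx : p ≤ S x := by
        rcases hx with hx | hx
        · exact hx.2
        · rw [mem_singleton_iff] at hx
          rw [hx, hS_one a (le_refl a)]; exact hp.2.le
      exact le_trans hpx (hS_anti hcx.le)
    have hIci : ⋂ n : ℕ, Ici (c - 1/(n+1)) = Ici c := by
      ext y
      simp only [mem_iInter, mem_Ici]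
      constructor
      · intro hy
        by_contra hcy
        push_neg at hcy
        obtain ⟨n, hn⟩ := exists_nat_one_div_lt (show (0:ℝ) < c - y by linarith)
        have := hy n
        linarith
      · intro hy n
        have hpos : (0:ℝ) < 1/(n+1) := by positivity
        linarith
    have htend : Tendsto (fun n : ℕ => μ (Ici (c - 1/(n+1)))) atTop
        (nhds (μ (Ici c))) := by
      have ht := tendsto_measure_iInter_atTop
        (μ := μ) (s := fun n : ℕ => Ici (c - 1/(n+1)))
        (fun n => measurableSet_Ici.nullMeasurableSet)
        (fun n m hnm => by
          apply Ici_subset_Ici.mpr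
          have h1' : (1:ℝ)/(m+1) ≤ 1/(n+1) := by
            apply one_div_le_one_div_of_le (by positivity)
            have : (n:ℝ) ≤ m := Nat.cast_le.mpr hnm
            linarith
          linarith)
        ⟨0, hne _⟩
      rwa [hIci] at ht
    have hge : ENNReal.ofReal p ≤ μ (Ici c) := by
      refine ge_of_tendsto htend (Eventually.of_forall fun n => ?_)
      have := hstep (1/(n+1)) (by positivity)
      exact ENNReal.ofReal_le_of_le_toReal this
    have := ENNReal.toReal_mono (hne (Ici c)) hge
    rwa [ENNReal.toReal_ofReal hp.1.le] at this
  -- structure of the superlevel sets of S.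
  have hlevel : ∀ p ∈ Ioo (0:ℝ) 1, {x | x ∈ Ioc a b ∧ p ≤ S x} = Ioc a (Bp p) := by
    intro p hp
    ext x
    simp only [mem_setOf_eq, mem_Ioc]
    constructor
    · rintro ⟨⟨hax, hxb⟩, hpx⟩
      exact ⟨hax, le_csSup (hBset_bdd p) (Or.inl ⟨⟨hax.le, hxb⟩, hpx⟩)⟩
    · rintro ⟨hax, hxc⟩
      have hxb : x ≤ b := hxc.trans (hBp_mem p).2
      exact ⟨⟨hax, hxb⟩, le_trans (hBp_key p hp) (hS_anti hxc)⟩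
  -- T p facts for p ∈ Ioo 0 1.
  have hT_bddBelow : ∀ p ∈ Ioo (0:ℝ) 1, ∀ x ∈ T p, a ≤ x := by
    intro p hp x hx
    by_contra hax
    push_neg at hax
    have hz := hFc_lt_a x hax
    have hx' : 1 - p ≤ Fc x := hx
    rw [hz] at hx'
    linarith [hp.2]
  have hT_ne : ∀ p ∈ Ioo (0:ℝ) 1, b ∈ T p := by
    intro p hp
    show 1 - p ≤ Fc b
    rw [hFc_b]; linarith [hp.1]
  have hAp_mem : ∀ p ∈ Ioo (0:ℝ) 1, Ap p ∈ Icc a b := by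
    intro p hp
    constructor
    · exact le_csInf ⟨b, hT_ne p hp⟩ (hT_bddBelow p hp)
    · exact csInf_le ⟨a, hT_bddBelow p hp⟩ (hT_ne p hp)
  -- A ≤ B on Ioo 0 1.
  have hAB : ∀ p ∈ Ioo (0:ℝ) 1, Ap p ≤ Bp p := by
    intro p hp
    by_contra hcon
    push_neg at hcon
    set x := (Bp p + Ap p)/2 with hx_def
    have hx1 : Bp p < x := by rw [hx_def]; linarith
    have hx2 : x < Ap p := by rw [hx_def]; linarith
    have hxab : x ∈ Icc a b :=
      ⟨(hBp_mem p).1.trans hx1.le, hx2.le.trans (hAp_mem p hp).2⟩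
    have hxT : x ∉ T p := fun hmem =>
      absurd (csInf_le ⟨a, hT_bddBelow p hp⟩ hmem) (not_le.mpr hx2)
    have hFcx : Fc x < 1 - p := not_le.mp hxT
    have hpSx : p ≤ S x := by
      rw [hS_compl]
      have := hFl_le_Fc x
      linarith
    have : x ≤ Bp p := le_csSup (hBset_bdd p) (Or.inl ⟨hxab, hpSx⟩)
    linarith
  -- separation: p < q → Bp q ≤ Ap p.
  have hsep : ∀ p ∈ Ioo (0:ℝ) 1, ∀ q ∈ Ioo (0:ℝ) 1, p < q → Bp q ≤ Ap p := by
    intro p hp q hq hpq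
    refine csSup_le (hBset_ne q) ?_
    intro x hx
    rcases hx with hx | hx
    · by_contra hcon
      push_neg at hcon
      obtain ⟨y, hy, hyx⟩ := exists_lt_of_csInf_lt ⟨b, hT_ne p hp⟩ hcon
      have h1' : 1 - p ≤ Fc y := hy
      have h2' : Fc y ≤ Fl x := hFc_le_Fl y x hyx
      have h3' : q ≤ S x := hx.2
      rw [hS_compl] at h3'
      linarith
    · rw [mem_singleton_iff] at hx
      rw [hx]
      exact (hAp_mem p hp).1
  -- countable bad set.
  have hbad : {p | p ∈ Ioo (0:ℝ) 1 ∧ Ap p < Bp p}.Countable :=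
    aux_countable_sep (A := Ap) (B := Bp) hsep
  have hbad0 : volume {p | p ∈ Ioo (0:ℝ) 1 ∧ Ap p < Bp p} = 0 :=
    hbad.measure_zero _
  have hbad_ae : ∀ᵐ p ∂(volume : Measure ℝ).restrict (Ioo (0:ℝ) 1),
      p ∉ {p | p ∈ Ioo (0:ℝ) 1 ∧ Ap p < Bp p} := by
    rw [← measure_eq_zero_iff_ae_notMem]
    rw [Measure.restrict_apply hbad.measurableSet]
    exact measure_mono_null inter_subset_left hbad0
  -- measurable representative of h'.
  obtain ⟨g, hg_sm, hg_ae⟩ := hint.1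
  have hg_int : IntegrableOn g (Ioo (0:ℝ) 1) := hint.congr hg_ae
  -- restrict to Ioo 0 1 equals restrict to Ioc 0 1.
  have hIooIoc : (volume : Measure ℝ).restrict (Ioo (0:ℝ) 1)
      = (volume : Measure ℝ).restrict (Ioc (0:ℝ) 1) :=
    Measure.restrict_congr_set Ioo_ae_eq_Ioc
  have hg_ae' : h' =ᵐ[(volume : Measure ℝ).restrict (Ioc (0:ℝ) 1)] g := by
    rwa [← hIooIoc]
  -- Step: pointwise rewrite of h (S x).
  have hpoint : ∀ x : ℝ, h (S x)
      = ∫ p in Ioo (0:ℝ) 1, (Ioc (0:ℝ) (S x)).indicator g p := by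
    intro x
    have h1' : h (S x) = ∫ p in (0:ℝ)..(S x), h' p :=
      hAC (S x) ⟨hS_nonneg x, hS_le_one x⟩
    rw [h1', intervalIntegral.integral_of_le (hS_nonneg x)]
    have hsub : Ioc (0:ℝ) (S x) ⊆ Ioc (0:ℝ) 1 :=
      Ioc_subset_Ioc_right (hS_le_one x)
    have h2' : ∫ p in Ioc (0:ℝ) (S x), h' p = ∫ p in Ioc (0:ℝ) (S x), g p :=
      integral_congr_ae (ae_restrict_of_ae_restrict_of_subset hsub hg_ae')
    rw [h2', setIntegral_indicator measurableSet_Ioc]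
    refine setIntegral_congr_set ?_
    rw [MeasureTheory.ae_eq_set]
    refine ⟨measure_mono_null ?_ (Real.volume_singleton (a := (1:ℝ))), ?_⟩
    · intro y hy
      rcases hy with ⟨hy1, hy2⟩
      have hy4 : y ∉ Ioo (0:ℝ) 1 := fun hmem => hy2 ⟨hmem, hy1⟩
      simp only [mem_Ioo, not_and, not_lt] at hy4
      have hy5 : 1 ≤ y := hy4 hy1.1
      have hy6 : y ≤ 1 := hy1.2.trans (hS_le_one x)
      simp [le_antisymm hy6 hy5]
    · rw [diff_eq_empty.mpr inter_subset_right]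
      exact measure_empty
  -- vanishing outside [a, b].
  have hvanish : ∀ x : ℝ, x ∉ Ioc a b → h (S x) = 0 := by
    intro x hx
    simp only [mem_Ioc, not_and, not_le] at hx
    by_cases hxa : a < x
    · rw [hS_zero x (hx hxa), h0]
    · push_neg at hxa
      rw [hS_one x hxa, h1]
  -- the product integrand.
  set f : ℝ → ℝ → ℝ := fun x p => (Ioc (0:ℝ) (S x)).indicator g p with hf_def
  have hE : MeasurableSet {z : ℝ × ℝ | 0 < z.2 ∧ z.2 ≤ S z.1} := by
    refine MeasurableSet.inter ?_ ?_
    · exact measurableSet_lt measurable_const measurable_snd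
    · exact measurableSet_le measurable_snd (hS_meas.comp measurable_fst)
  have huncurry : Function.uncurry f
      = ({z : ℝ × ℝ | 0 < z.2 ∧ z.2 ≤ S z.1}).indicator (fun z => g z.2) := by
    funext z
    simp only [Function.uncurry, hf_def, indicator_apply, mem_Ioc, mem_setOf_eq]
  haveI hfin : IsFiniteMeasure ((volume : Measure ℝ).restrict (Ioc a b)) := by
    constructor
    rw [Measure.restrict_apply_univ, Real.volume_Ioc]
    exact ENNReal.ofReal_lt_top
  have hint2 : Integrable (fun z : ℝ × ℝ => g z.2)
      (((volume : Measure ℝ).restrict (Ioc a b)).prod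
        ((volume : Measure ℝ).restrict (Ioo (0:ℝ) 1))) := by
    have := Integrable.mul_prod
      (integrable_const (μ := (volume : Measure ℝ).restrict (Ioc a b)) (1:ℝ)) hg_int
    simpa using this
  have hFint : Integrable (Function.uncurry f)
      (((volume : Measure ℝ).restrict (Ioc a b)).prod
        ((volume : Measure ℝ).restrict (Ioo (0:ℝ) 1))) := by
    rw [huncurry]
    exact hint2.indicator hE
  -- inner integral computation.
  have hinner : ∀ p ∈ Ioo (0:ℝ) 1,
      ∫ x in Ioc a b, f x p = (Bp p - a) * g p := by
    intro p hp
    have hcongr : EqOn (fun x => f x p)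
        ((Ioc a (Bp p)).indicator (fun _ => g p)) (Ioc a b) := by
      intro x hx
      show (Ioc (0:ℝ) (S x)).indicator g p
        = (Ioc a (Bp p)).indicator (fun _ => g p) x
      by_cases hpx : p ≤ S x
      · have hx1 : x ∈ Ioc a (Bp p) := by
          rw [← hlevel p hp]; exact ⟨hx, hpx⟩
        have hpm : p ∈ Ioc (0:ℝ) (S x) := mem_Ioc.mpr ⟨hp.1, hpx⟩
        rw [indicator_of_mem hpm g, indicator_of_mem hx1]
      · have hx1 : x ∉ Ioc a (Bp p) := by
          rw [← hlevel p hp]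
          exact fun hmem => hpx hmem.2
        rw [indicator_of_notMem (fun hmem => hpx hmem.2) g, indicator_of_notMem hx1]
    rw [setIntegral_congr_fun measurableSet_Ioc hcongr,
      setIntegral_indicator measurableSet_Ioc]
    have hss : Ioc a b ∩ Ioc a (Bp p) = Ioc a (Bp p) :=
      inter_eq_self_of_subset_right (Ioc_subset_Ioc_right (hBp_mem p).2)
    rw [hss, setIntegral_const, measureReal_def, Real.volume_Ioc,
      ENNReal.toReal_ofReal (by linarith [(hBp_mem p).1])]
    simp [smul_eq_mul]
  -- integrability of the final integrands.
  have hBg_int : Integrable (fun p => Bp p * g p)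
      ((volume : Measure ℝ).restrict (Ioo (0:ℝ) 1)) := by
    refine Integrable.bdd_mul (c := max |a| |b|) hg_int hBp_meas.aestronglyMeasurable ?_
    refine Eventually.of_forall fun p => ?_
    rw [Real.norm_eq_abs]
    exact abs_le_max_abs_abs (hBp_mem p).1 (hBp_mem p).2
  have hg0 : ∫ p in Ioo (0:ℝ) 1, g p = 0 := by
    have hac1 := hAC 1 ⟨zero_le_one, le_refl 1⟩
    rw [h1, intervalIntegral.integral_of_le zero_le_one] at hac1
    have e1 : ∫ p in Ioc (0:ℝ) 1, h' p = ∫ p in Ioc (0:ℝ) 1, g p :=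
      integral_congr_ae hg_ae'
    calc ∫ p in Ioo (0:ℝ) 1, g p = ∫ p in Ioc (0:ℝ) 1, g p := by rw [hIooIoc]
      _ = ∫ p in Ioc (0:ℝ) 1, h' p := e1.symm
      _ = 0 := hac1.symm
  -- main computation.
  calc ∫ x : ℝ, h ((μ (Ici x)).toReal)
      = ∫ x : ℝ, (Ioc a b).indicator (fun y => h (S y)) x := by
        refine integral_congr_ae (Eventually.of_forall fun x => ?_)
        by_cases hx : x ∈ Ioc a b
        · rw [indicator_of_mem hx]
        · rw [indicator_of_notMem hx]
          exact hvanish x hx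
    _ = ∫ x in Ioc a b, h (S x) := integral_indicator measurableSet_Ioc
    _ = ∫ x in Ioc a b, ∫ p in Ioo (0:ℝ) 1, f x p := by
        refine integral_congr_ae (Eventually.of_forall fun x => ?_)
        exact hpoint x
    _ = ∫ p in Ioo (0:ℝ) 1, ∫ x in Ioc a b, f x p :=
        integral_integral_swap hFint
    _ = ∫ p in Ioo (0:ℝ) 1, (Bp p - a) * g p := by
        refine integral_congr_ae ?_
        filter_upwards [ae_restrict_mem measurableSet_Ioo] with p hp
        exact hinner p hp
    _ = ∫ p in Ioo (0:ℝ) 1, (Bp p * g p - a * g p) := by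
        refine integral_congr_ae (Eventually.of_forall fun p => ?_)
        ring
    _ = (∫ p in Ioo (0:ℝ) 1, Bp p * g p) - ∫ p in Ioo (0:ℝ) 1, a * g p :=
        integral_sub hBg_int (hg_int.const_mul a)
    _ = ∫ p in Ioo (0:ℝ) 1, Bp p * g p := by
        rw [MeasureTheory.integral_const_mul, hg0, mul_zero, sub_zero]
    _ = ∫ p in Ioo (0:ℝ) 1, Qμ (1 - p) * h' p := by
        refine integral_congr_ae ?_
        filter_upwards [hg_ae, ae_restrict_mem measurableSet_Ioo, hbad_ae]
          with p hp1 hp2 hp3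
        have hApBp : Ap p = Bp p := by
          refine le_antisymm (hAB p hp2) ?_
          by_contra hlt
          exact hp3 ⟨hp2, not_le.mp hlt⟩
        rw [hQA p, hApBp, hp1]
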